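/- arXiv:0802.0579 — 6 statements merged into one kernel-verified Lean document; each statement's English description precedes it below -/
import Mathlib

section
/- Let ω > 0 and q = 2ω/(1+ω) (equivalently ω = q/(2-q)), with 0 < q < 2. Then the two polynomials Z² - (2-q)Z + 1 and (1+ω)Z² - 2Z + (1+ω) are proportional, so the quartic (Z² - (2-q)Z + 1)((1+ω)Z² - 2Z + (1+ω)) has two double roots, namely (2-q ± i√(q(4-q)))/2, each of modulus 1. -/
theorem stmt_9 (ω q : ℝ) (hω : 0 < ω) (hq : q = 2 * ω / (1 + ω)) (hq0 : 0 < q) (hq2 : q < 2) :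
    (∀ Z : ℂ, ((1 + ω : ℝ) : ℂ) * (Z ^ 2 - (2 - (q : ℂ)) * Z + 1)
        = ((1 + ω : ℝ) : ℂ) * Z ^ 2 - 2 * Z + ((1 + ω : ℝ) : ℂ)) ∧
    (∀ Z : ℂ,
      (Z ^ 2 - (2 - (q : ℂ)) * Z + 1) * (((1 + ω : ℝ) : ℂ) * Z ^ 2 - 2 * Z + ((1 + ω : ℝ) : ℂ))
        = ((1 + ω : ℝ) : ℂ) *
            (Z - (((2 - q : ℝ) : ℂ) + Complex.I * ((Real.sqrt (q * (4 - q)) : ℝ) : ℂ)) / 2) ^ 2 *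
            (Z - (((2 - q : ℝ) : ℂ) - Complex.I * ((Real.sqrt (q * (4 - q)) : ℝ) : ℂ)) / 2) ^ 2) ∧
    ‖(((2 - q : ℝ) : ℂ) + Complex.I * ((Real.sqrt (q * (4 - q)) : ℝ) : ℂ)) / 2‖ = 1 ∧
    ‖(((2 - q : ℝ) : ℂ) - Complex.I * ((Real.sqrt (q * (4 - q)) : ℝ) : ℂ)) / 2‖ = 1 := by
  have hω1 : (0:ℝ) < 1 + ω := by linarith
  have hkey : (1 + ω) * (2 - q) = 2 := by
    rw [hq]; field_simp; ring
  set s := Real.sqrt (q * (4 - q)) with hsdef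
  have hsnn : 0 ≤ q * (4 - q) := by nlinarith
  have hs2 : s ^ 2 = q * (4 - q) := Real.sq_sqrt hsnn
  have hkC : (1 + (ω:ℂ)) * (2 - (q:ℂ)) = 2 := by exact_mod_cast hkey
  have hsC : ((s:ℝ):ℂ) ^ 2 = (q:ℂ) * (4 - (q:ℂ)) := by exact_mod_cast hs2
  have hsum : (2 - q) ^ 2 + s ^ 2 = 4 := by rw [hs2]; ring
  have hfirst : ∀ Z : ℂ, ((1 + ω : ℝ) : ℂ) * (Z ^ 2 - (2 - (q : ℂ)) * Z + 1)
      = ((1 + ω : ℝ) : ℂ) * Z ^ 2 - 2 * Z + ((1 + ω : ℝ) : ℂ) := by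
    intro Z
    push_cast
    linear_combination (-Z) * hkC
  have hAB : ∀ Z : ℂ,
      (Z - (((2 - q : ℝ) : ℂ) + Complex.I * (s : ℂ)) / 2) *
        (Z - (((2 - q : ℝ) : ℂ) - Complex.I * (s : ℂ)) / 2)
      = Z ^ 2 - (2 - (q : ℂ)) * Z + 1 := by
    intro Z
    push_cast
    linear_combination (-(s:ℂ)^2/4) * Complex.I_sq + (1/4 : ℂ) * hsC
  refine ⟨hfirst, fun Z => ?_, ?_, ?_⟩
  · rw [← hfirst Z]
    calc (Z ^ 2 - (2 - (q : ℂ)) * Z + 1) * (((1 + ω : ℝ) : ℂ) * (Z ^ 2 - (2 - (q : ℂ)) * Z + 1))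
        = ((1 + ω : ℝ) : ℂ) * ((Z - (((2 - q : ℝ) : ℂ) + Complex.I * (s : ℂ)) / 2) *
            (Z - (((2 - q : ℝ) : ℂ) - Complex.I * (s : ℂ)) / 2)) ^ 2 := by rw [hAB Z]; ring
      _ = _ := by ring
  · rw [norm_div, show ((2 - q : ℝ) : ℂ) + Complex.I * (s : ℂ) = Complex.ofReal (2-q) + (s:ℝ) * Complex.I by ring]
    rw [Complex.norm_def, Complex.normSq_add_mul_I, hsum]
    rw [show (4:ℝ) = 2^2 by norm_num, Real.sqrt_sq (by norm_num : (0:ℝ) ≤ 2)]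
    norm_num
  · rw [norm_div, show ((2 - q : ℝ) : ℂ) - Complex.I * (s : ℂ) = Complex.ofReal (2-q) + (-s:ℝ) * Complex.I by push_cast; ring]
    rw [Complex.norm_def, Complex.normSq_add_mul_I,
      show (2-q)^2 + (-s)^2 = 4 by rw [neg_pow]; simpa using hsum]
    rw [show (4:ℝ) = 2^2 by norm_num, Real.sqrt_sq (by norm_num : (0:ℝ) ≤ 2)]
    norm_num
end

section
/- Let ε > 1, q ∈ (0,2] and define f(ω) = -4ω²ε² + 8ωε + 4(ω(ε+1)+1)q - q² for real ω. Then f(ω) > 0 for all ω ∈ (0, 2/(2ε-1)]. -/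
theorem stmt_11 (ε q : ℝ) (hε : 1 < ε) (hq0 : 0 < q) (hq2 : q ≤ 2) :
    ∀ ω : ℝ, 0 < ω → ω ≤ 2 / (2 * ε - 1) →
      0 < -4 * ω ^ 2 * ε ^ 2 + 8 * ω * ε + 4 * (ω * (ε + 1) + 1) * q - q ^ 2 := by
  intro ω hω1 hω2
  have hd : 0 < 2 * ε - 1 := by linarith
  have h2 : ω * (2 * ε - 1) ≤ 2 := by
    rw [div_eq_mul_inv] at hω2
    calc ω * (2 * ε - 1) ≤ 2 * (2 * ε - 1)⁻¹ * (2 * ε - 1) := by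
          exact mul_le_mul_of_nonneg_right hω2 hd.le
      _ = 2 := by field_simp
  nlinarith [sq_nonneg (ω * (2 * ε - 1) - 2), mul_pos hω1 hq0, sq_nonneg q,
    mul_nonneg hq0.le (sub_nonneg.2 hq2), mul_pos hω1 hd, sq_nonneg ω,
    mul_nonneg (mul_nonneg hω1.le hq0.le) (sub_nonneg.2 hq2),
    mul_nonneg (sub_nonneg.2 h2) hq0.le, mul_nonneg (sub_nonneg.2 h2) (sub_nonneg.2 h2)]
end

section
/- Let δ > 0 and s > 0. The quadratic (1+δ+s/2)Z² - (2-s)Z + (1-δ+s/2) has both roots of modulus strictly less than 1. -/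
theorem stmt_14 (δ s : ℝ) (hδ : 0 < δ) (hs : 0 < s) :
    ∀ z : ℂ, ((1 + δ + s / 2 : ℝ) : ℂ) * z ^ 2 - ((2 - s : ℝ) : ℂ) * z +
        ((1 - δ + s / 2 : ℝ) : ℂ) = 0 →
      ‖z‖ < 1 := by
  intro z hz
  have hre := congrArg Complex.re hz
  have him := congrArg Complex.im hz
  simp [Complex.ext_iff, pow_two, Complex.mul_re, Complex.mul_im] at hre him
  have hsq : z.re ^ 2 + z.im ^ 2 < 1 := by
    rcases eq_or_ne z.im 0 with h0 | h0
    · rw [h0] at hre ⊢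
      rcases le_or_gt 1 z.re with hx1 | hx1
      · exfalso
        have key : 0 ≤ (z.re - 1) * ((1 + δ + s / 2) * (z.re + 1) + (s - 2)) := by
          apply mul_nonneg (by linarith)
          nlinarith
        nlinarith
      · rcases le_or_gt z.re (-1) with hx2 | hx2
        · exfalso
          have key : 0 ≤ (-(z.re + 1)) * (-((1 + δ + s / 2) * (z.re - 1) + (s - 2))) :=
            mul_nonneg (by linarith) (by nlinarith)
          nlinarith
        · nlinarith [mul_pos (show (0:ℝ) < 1 - z.re by linarith)
            (show (0:ℝ) < 1 + z.re by linarith)]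
    · have hfac : ((1 + δ + s / 2) * (2 * z.re) - (2 - s)) * z.im = 0 := by
        linear_combination him
      have h2 : (1 + δ + s / 2) * (2 * z.re) - (2 - s) = 0 :=
        (mul_eq_zero.mp hfac).resolve_right h0
      have h3 : ((1 + δ + s / 2) * (2 * z.re) - (2 - s)) * z.re = 0 := by
        rw [h2]; ring
      have key : (1 + δ + s / 2) * (z.re ^ 2 + z.im ^ 2) = 1 - δ + s / 2 := by
        linear_combination h3 - hre
      nlinarith [sq_nonneg z.re, sq_nonneg z.im]
  have habs : ‖z‖ ^ 2 = z.re ^ 2 + z.im ^ 2 := by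
    rw [Complex.sq_norm, Complex.normSq_apply]; ring
  nlinarith [norm_nonneg z, habs]
end

section
/- Let ε ≥ 1, ω ∈ (0, 2/(2ε-1)) and q ∈ (0,2). Set N = 2ε(2-ωε) - (ε-1)q - (2-ωε)q and D = 2ε(2-ωε) - (ε-1)q. Then D > 0 and |N| < D, i.e. the root N/D of the linear polynomial DZ - N has modulus strictly less than 1. -/
theorem stmt_15 (ε ω q : ℝ) (hε : 1 ≤ ε) (hω0 : 0 < ω) (hω : ω < 2 / (2 * ε - 1))
    (hq0 : 0 < q) (hq2 : q < 2) :
    0 < 2 * ε * (2 - ω * ε) - (ε - 1) * q ∧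
    |2 * ε * (2 - ω * ε) - (ε - 1) * q - (2 - ω * ε) * q|
      < 2 * ε * (2 - ω * ε) - (ε - 1) * q := by
  have hd : (0:ℝ) < 2 * ε - 1 := by linarith
  have h1 : ω * (2 * ε - 1) < 2 := by
    have := (lt_div_iff₀ hd).mp hω
    linarith
  have hωε : 0 < 2 - ω * ε := by nlinarith [mul_nonneg hω0.le (sub_nonneg.mpr hε)]
  have hD : 0 < 2 * ε * (2 - ω * ε) - (ε - 1) * q := by
    nlinarith [mul_nonneg (sub_nonneg.mpr hε) hq0.le]
  refine ⟨hD, abs_lt.mpr ⟨?_, ?_⟩⟩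
  · nlinarith [mul_pos hωε hq0, mul_nonneg (sub_nonneg.mpr hε) hq0.le,
      mul_pos hωε (sub_pos.mpr hq2), mul_nonneg (sub_nonneg.mpr hε) (sub_pos.mpr hq2).le]
  · nlinarith [mul_pos hωε hq0]
end

section
/- Let ε ≥ 1, ω > 0, q ∈ (0,2] with ω ≤ 2/(2ε-1). Then (2ωε + q)(8 - (2ωε + q)) + 16ωq > 0 and ((2ω - q)² + 4ω(ε-1)(q + ω(ε+1))) ≥ 0, i.e. ψ₁*(0) + ψ₁(0) ≥ 0 and ψ₁*(0) - ψ₁(0) ≥ 0 for the harmonic Lorentz–Young analysis. -/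
theorem stmt_16 (ε ω q : ℝ) (hε : 1 ≤ ε) (hω0 : 0 < ω) (hω : ω ≤ 2 / (2 * ε - 1))
    (hq0 : 0 < q) (hq2 : q ≤ 2) :
    0 < (2 * ω * ε + q) * (8 - (2 * ω * ε + q)) + 16 * ω * q ∧
    0 ≤ (2 * ω - q) ^ 2 + 4 * ω * (ε - 1) * (q + ω * (ε + 1)) := by
  have h1 : (0:ℝ) < 2 * ε - 1 := by linarith
  have h2 : ω * (2 * ε - 1) ≤ 2 := by
    rw [← le_div_iff₀ h1] at *; linarith
  constructor
  · nlinarith [mul_pos hω0 hq0, sq_nonneg (2 * ω * ε + q), mul_nonneg hω0.le (sub_nonneg.mpr hε)]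
  · nlinarith [sq_nonneg (2 * ω - q), mul_nonneg (mul_nonneg hω0.le (sub_nonneg.mpr hε)) (by nlinarith : (0:ℝ) ≤ q + ω * (ε + 1))]
end

section
/- Let φ(z) = c₀ + c₁z + ... + c_p z^p be a polynomial over ℂ with c_p ≠ 0, let φ*(z) = c_p̄ + c_{p-1}̄ z + ... + c₀̄ z^p be its conjugate-reversed polynomial, and define φ₁(z) = (φ*(0)φ(z) - φ(0)φ*(z))/z. Then φ has all roots of modulus < 1 and exact degree d ≥ 1 if and only if φ₁ has all roots of modulus < 1, exact degree d-1, and |φ(0)| < |φ*(0)|. -/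
open Polynomial

/-- The conjugate-reversed polynomial `φ*`: if `φ = c₀ + c₁ z + ⋯ + c_p z^p` then
`φ* = c_p̄ + c_{p-1}̄ z + ⋯ + c₀̄ z^p`. -/
noncomputable def conjReverse (φ : Polynomial ℂ) : Polynomial ℂ :=
  (φ.map (starRingEnd ℂ)).reverse

/-- One step of the Schur recursion: `φ₁(z) = (φ*(0) φ(z) - φ(0) φ*(z)) / z`. -/
noncomputable def schurStep (φ : Polynomial ℂ) : Polynomial ℂ :=
  (C ((conjReverse φ).coeff 0) * φ - C (φ.coeff 0) * conjReverse φ).divX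

/-- A Schur polynomial: all roots have modulus `< 1`. -/
def IsSchurPoly (φ : Polynomial ℂ) : Prop :=
  ∀ z : ℂ, φ.IsRoot z → ‖z‖ < 1


lemma reflect_reflect' (N : ℕ) (f : Polynomial ℂ) : reflect N (reflect N f) = f := by
  ext i; simp [coeff_reflect, revAt_invol]

lemma eval_reflect' {z : ℂ} (hz : z ≠ 0) (N : ℕ) (f : Polynomial ℂ) (hf : f.natDegree ≤ N) :
    (reflect N f).eval z = z ^ N * f.eval z⁻¹ := by
  have : Invertible z⁻¹ := invertibleOfNonzero (inv_ne_zero hz)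
  have h := eval₂_reflect_mul_pow (RingHom.id ℂ) z⁻¹ N f hf
  rw [invOf_eq_inv, inv_inv] at h
  have h2 : (reflect N f).eval z * (z⁻¹) ^ N = f.eval z⁻¹ := h
  rw [← h2]
  rw [mul_left_comm, ← mul_pow, mul_inv_cancel₀ hz, one_pow, mul_one]

lemma eval_map_conj' (p : Polynomial ℂ) (w : ℂ) :
    (p.map (starRingEnd ℂ)).eval w = (starRingEnd ℂ) (p.eval ((starRingEnd ℂ) w)) := by
  have h := Polynomial.hom_eval₂ p (starRingEnd ℂ) (starRingEnd ℂ) w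
  have hid : (starRingEnd ℂ).comp (starRingEnd ℂ) = RingHom.id ℂ :=
    RingHom.ext fun x => Complex.conj_conj x
  rw [hid] at h
  have h2 : (starRingEnd ℂ) ((p.map (starRingEnd ℂ)).eval w) = p.eval ((starRingEnd ℂ) w) := by
    rw [eval_map]; exact h
  rw [← h2, Complex.conj_conj]

lemma abs_one_sub_conj_mul_le {z r : ℂ} (hr : ‖r‖ ≤ 1) (hz : 1 ≤ ‖z‖) :
    ‖1 - (starRingEnd ℂ) z * r‖ ≤ ‖z - r‖ := by
  have h1 : Complex.normSq r ≤ 1 := by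
    rw [← Complex.sq_norm]; nlinarith [norm_nonneg r]
  have h2 : 1 ≤ Complex.normSq z := by
    rw [← Complex.sq_norm]; nlinarith
  rw [Complex.norm_def, Complex.norm_def]
  apply Real.sqrt_le_sqrt
  simp only [Complex.normSq_apply, Complex.sub_re, Complex.sub_im, Complex.mul_re,
    Complex.mul_im, Complex.one_re, Complex.one_im, Complex.conj_re, Complex.conj_im,
    Complex.normSq_apply] at *
  nlinarith [sq_nonneg (z.re*z.re + z.im*z.im - 1), sq_nonneg (1 - (r.re*r.re + r.im*r.im))]

lemma multiset_prod_map_nonneg {s : Multiset ℂ} {f : ℂ → ℝ} (h : ∀ r ∈ s, 0 ≤ f r) :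
    0 ≤ (s.map f).prod := by
  induction s using Multiset.induction with
  | empty => simp
  | cons a t ih =>
    simp only [Multiset.map_cons, Multiset.prod_cons]
    exact mul_nonneg (h a (Multiset.mem_cons_self a t))
      (ih fun r hr => h r (Multiset.mem_cons_of_mem hr))

lemma multiset_prod_map_le {s : Multiset ℂ} {f g : ℂ → ℝ}
    (h : ∀ r ∈ s, 0 ≤ f r ∧ f r ≤ g r) :
    (s.map f).prod ≤ (s.map g).prod := by
  induction s using Multiset.induction with
  | empty => simp
  | cons a t ih =>
    simp only [Multiset.map_cons, Multiset.prod_cons]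
    have ha := h a (Multiset.mem_cons_self a t)
    have ht := ih fun r hr => h r (Multiset.mem_cons_of_mem hr)
    have hft : 0 ≤ (t.map f).prod :=
      multiset_prod_map_nonneg fun r hr => (h r (Multiset.mem_cons_of_mem hr)).1
    exact mul_le_mul ha.2 ht hft (le_trans ha.1 ha.2)

lemma multiset_prod_abs_le_one {s : Multiset ℂ} (h : ∀ r ∈ s, ‖r‖ < 1) :
    (s.map (‖·‖)).prod ≤ 1 := by
  induction s using Multiset.induction with
  | empty => simp
  | cons a t ih =>
    simp only [Multiset.map_cons, Multiset.prod_cons]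
    have ht := ih fun r hr => h r (Multiset.mem_cons_of_mem hr)
    have hft : 0 ≤ (t.map (‖·‖)).prod :=
      multiset_prod_map_nonneg fun r _ => norm_nonneg r
    exact mul_le_one₀ (le_of_lt (h a (Multiset.mem_cons_self a t))) hft ht

lemma multiset_prod_abs_lt_one {s : Multiset ℂ} (hs : s ≠ 0)
    (h : ∀ r ∈ s, ‖r‖ < 1) : (s.map (‖·‖)).prod < 1 := by
  obtain ⟨a, ha⟩ := Multiset.exists_mem_of_ne_zero hs
  obtain ⟨t, rfl⟩ := Multiset.exists_cons_of_mem ha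
  simp only [Multiset.map_cons, Multiset.prod_cons]
  have ht : (t.map (‖·‖)).prod ≤ 1 :=
    multiset_prod_abs_le_one fun r hr => h r (Multiset.mem_cons_of_mem hr)
  calc ‖a‖ * (t.map (‖·‖)).prod
      ≤ ‖a‖ * 1 := by
        exact mul_le_mul_of_nonneg_left ht (norm_nonneg a)
    _ = ‖a‖ := mul_one _
    _ < 1 := h a (Multiset.mem_cons_self a t)

lemma abs_eval_eq (q : Polynomial ℂ) (y : ℂ) :
    ‖q.eval y‖
      = ‖q.leadingCoeff‖ * (q.roots.map fun r => ‖y - r‖).prod := by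
  conv_lhs => rw [← C_leadingCoeff_mul_prod_multiset_X_sub_C (splits_iff_card_roots.mp (IsAlgClosed.splits q))]
  rw [eval_mul, eval_C, norm_mul, eval_multiset_prod]
  rw [show ‖(Multiset.map (eval y) (Multiset.map (fun a => X - C a) q.roots)).prod‖
      = (Multiset.map (fun x => ‖x‖) (Multiset.map (eval y) (Multiset.map (fun a => X - C a) q.roots))).prod
    from map_multiset_prod (normHom : ℂ →*₀ ℝ) _]
  rw [Multiset.map_map, Multiset.map_map]
  congr 1
  exact congrArg Multiset.prod (Multiset.map_congr rfl fun r _ => by simp)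

lemma natDegree_map_conj (φ : Polynomial ℂ) :
    (φ.map (starRingEnd ℂ)).natDegree = φ.natDegree :=
  natDegree_map_eq_of_injective (RingHom.injective _) φ

lemma conjReverse_def (φ : Polynomial ℂ) :
    conjReverse φ = reflect φ.natDegree (φ.map (starRingEnd ℂ)) := by
  rw [conjReverse, reverse, natDegree_map_conj]

lemma conjReverse_natDegree_le (φ : Polynomial ℂ) :
    (conjReverse φ).natDegree ≤ φ.natDegree := by
  rw [conjReverse]
  exact (reverse_natDegree_le _).trans (natDegree_map_conj φ).le

lemma conjReverse_coeff (φ : Polynomial ℂ) (i : ℕ) (hi : i ≤ φ.natDegree) :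
    (conjReverse φ).coeff i = (starRingEnd ℂ) (φ.coeff (φ.natDegree - i)) := by
  rw [conjReverse_def, coeff_reflect, revAt_le hi, coeff_map]

lemma conjReverse_coeff_zero (φ : Polynomial ℂ) :
    (conjReverse φ).coeff 0 = (starRingEnd ℂ) (φ.coeff φ.natDegree) := by
  rw [conjReverse_coeff φ 0 (Nat.zero_le _), Nat.sub_zero]

lemma conjReverse_eval (φ : Polynomial ℂ) {z : ℂ} (hz : z ≠ 0) :
    (conjReverse φ).eval z
      = z ^ φ.natDegree * (starRingEnd ℂ) (φ.eval (((starRingEnd ℂ) z)⁻¹)) := by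
  rw [conjReverse_def, eval_reflect' hz _ _ (natDegree_map_conj φ).le, eval_map_conj',
    map_inv₀]

lemma schur_key {φ : Polynomial ℂ} (hφ : φ ≠ 0) (hs : IsSchurPoly φ) {z : ℂ}
    (hz : 1 ≤ ‖z‖) :
    ‖(conjReverse φ).eval z‖ ≤ ‖φ.eval z‖ ∧
      0 < ‖φ.eval z‖ := by
  have hz0 : z ≠ 0 := by
    intro h; rw [h] at hz; simp at hz; linarith
  have hzc : (starRingEnd ℂ) z ≠ 0 := by simpa using hz0
  have hroot : ∀ r ∈ φ.roots, ‖r‖ < 1 := fun r hr =>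
    hs r (isRoot_of_mem_roots hr)
  constructor
  · set w : ℂ := ((starRingEnd ℂ) z)⁻¹ with hw
    rw [conjReverse_eval φ hz0, norm_mul, norm_pow, Complex.norm_conj, abs_eval_eq,
      abs_eval_eq φ z]
    have hcard : φ.roots.card = φ.natDegree :=
      (splits_iff_card_roots.mp (IsAlgClosed.splits φ))
    rw [← hcard]
    rw [show (‖z‖) ^ φ.roots.card
        = (Multiset.map (fun _ : ℂ => ‖z‖) φ.roots).prod by
      rw [Multiset.map_const', Multiset.prod_replicate]]
    rw [mul_left_comm, ← Multiset.prod_map_mul]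
    apply mul_le_mul_of_nonneg_left _ (norm_nonneg _)
    apply multiset_prod_map_le
    intro r hr
    refine ⟨mul_nonneg (norm_nonneg _) (norm_nonneg _), ?_⟩
    have key : ‖z‖ * ‖w - r‖
        = ‖1 - (starRingEnd ℂ) z * r‖ := by
      rw [← Complex.norm_conj z, ← norm_mul]
      congr 1
      rw [hw, mul_sub, mul_inv_cancel₀ hzc]
    rw [key]
    exact abs_one_sub_conj_mul_le (le_of_lt (hroot r hr)) hz
  · rw [norm_pos_iff]
    intro h
    have := hs z h
    linarith

lemma psi_spec (φ : Polynomial ℂ)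
    (hb : ‖φ.coeff 0‖ < ‖(conjReverse φ).coeff 0‖) :
    1 ≤ φ.natDegree ∧
    (C ((conjReverse φ).coeff 0) * φ - C (φ.coeff 0) * conjReverse φ).natDegree = φ.natDegree ∧
    schurStep φ * X = C ((conjReverse φ).coeff 0) * φ - C (φ.coeff 0) * conjReverse φ ∧
    schurStep φ ≠ 0 ∧
    (schurStep φ).natDegree = φ.natDegree - 1 := by
  set a := (conjReverse φ).coeff 0 with ha
  set b := φ.coeff 0 with hbdef
  set ψ := C a * φ - C b * conjReverse φ with hψ
  have hab : ‖b‖ < ‖φ.coeff φ.natDegree‖ := by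
    rwa [ha, conjReverse_coeff_zero, Complex.norm_conj] at hb
  have hp : 1 ≤ φ.natDegree := by
    by_contra h
    push_neg at h
    interval_cases hn : φ.natDegree
    · exact lt_irrefl _ hab
  have hcoeffp : ψ.coeff φ.natDegree
      = (Complex.normSq (φ.coeff φ.natDegree) : ℂ) - (Complex.normSq b : ℂ) := by
    rw [hψ, coeff_sub, coeff_C_mul, coeff_C_mul,
      conjReverse_coeff φ φ.natDegree le_rfl, Nat.sub_self, ha, conjReverse_coeff_zero]
    rw [← hbdef, Complex.mul_conj, mul_comm ((starRingEnd ℂ) (φ.coeff φ.natDegree)) _,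
      Complex.mul_conj]
  have hcoeffp_ne : ψ.coeff φ.natDegree ≠ 0 := by
    rw [hcoeffp, ← Complex.ofReal_sub]
    rw [Ne, Complex.ofReal_eq_zero, sub_eq_zero]
    intro h
    rw [Complex.normSq_eq_norm_sq, Complex.normSq_eq_norm_sq] at h
    have := pow_lt_pow_left₀ hab (norm_nonneg b) two_ne_zero
    rw [← h] at this
    exact lt_irrefl _ this
  have hψdeg : ψ.natDegree = φ.natDegree := by
    refine le_antisymm ?_ (le_natDegree_of_ne_zero hcoeffp_ne)
    refine (natDegree_sub_le _ _).trans (max_le ?_ ?_)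
    · exact natDegree_C_mul_le _ _
    · exact (natDegree_C_mul_le _ _).trans (conjReverse_natDegree_le φ)
  have hψ0 : ψ.coeff 0 = 0 := by
    rw [hψ, coeff_sub, coeff_C_mul, coeff_C_mul, ← ha, ← hbdef, mul_comm]
    ring
  have hX : schurStep φ * X = ψ := by
    have := divX_mul_X_add ψ
    rw [hψ0, map_zero, add_zero] at this
    rw [show schurStep φ = ψ.divX from rfl]
    exact this
  have hψne : ψ ≠ 0 := fun h => hcoeffp_ne (by rw [h, coeff_zero])
  have hsne : schurStep φ ≠ 0 := by
    intro h
    rw [h, zero_mul] at hX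
    exact hψne hX.symm
  refine ⟨hp, hψdeg, hX, hsne, ?_⟩
  rw [show schurStep φ = ψ.divX from rfl, natDegree_divX_eq_natDegree_tsub_one, hψdeg]

lemma map_conj_conj (q : Polynomial ℂ) :
    (q.map (starRingEnd ℂ)).map (starRingEnd ℂ) = q := by
  rw [map_map, show (starRingEnd ℂ).comp (starRingEnd ℂ) = RingHom.id ℂ from
    RingHom.ext fun x => Complex.conj_conj x, map_id]

lemma conjReverse_psi (φ : Polynomial ℂ)
    (hb : ‖φ.coeff 0‖ < ‖(conjReverse φ).coeff 0‖) :
    conjReverse (C ((conjReverse φ).coeff 0) * φ - C (φ.coeff 0) * conjReverse φ)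
      = C ((starRingEnd ℂ) ((conjReverse φ).coeff 0)) * conjReverse φ
        - C ((starRingEnd ℂ) (φ.coeff 0)) * φ := by
  obtain ⟨hp, hψdeg, hX, hsne, hsdeg⟩ := psi_spec φ hb
  set a := (conjReverse φ).coeff 0
  set b := φ.coeff 0
  set ψ := C a * φ - C b * conjReverse φ with hψ
  rw [conjReverse_def, hψdeg]
  have hmap : ψ.map (starRingEnd ℂ)
      = C ((starRingEnd ℂ) a) * φ.map (starRingEnd ℂ)
        - C ((starRingEnd ℂ) b) * (conjReverse φ).map (starRingEnd ℂ) := by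
    rw [hψ, Polynomial.map_sub, Polynomial.map_mul, Polynomial.map_mul, map_C, map_C]
  rw [hmap, reflect_sub, reflect_C_mul, reflect_C_mul]
  congr 1
  · rw [← conjReverse_def]
  · congr 1
    rw [conjReverse_def, ← reflect_map, reflect_reflect', map_conj_conj]

lemma coeff_zero_lt (φ : Polynomial ℂ) (hφ : φ ≠ 0) (hd : 1 ≤ φ.natDegree)
    (hs : IsSchurPoly φ) :
    ‖φ.coeff 0‖ < ‖(conjReverse φ).coeff 0‖ := by
  rw [conjReverse_coeff_zero, Complex.norm_conj]
  have h0 : φ.coeff 0 = φ.eval 0 := (coeff_zero_eq_eval_zero φ).symm ▸ rfl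
  rw [coeff_zero_eq_eval_zero, abs_eval_eq]
  have hlc : 0 < ‖φ.leadingCoeff‖ :=
    norm_pos_iff.mpr (leadingCoeff_ne_zero.mpr hφ)
  have hcard : φ.roots.card = φ.natDegree :=
    splits_iff_card_roots.mp (IsAlgClosed.splits φ)
  have hne : φ.roots ≠ 0 := by
    intro h
    rw [h, Multiset.card_zero] at hcard
    omega
  have hprodeq : (Multiset.map (fun r => ‖0 - r‖) φ.roots).prod
      = (Multiset.map (‖·‖) φ.roots).prod := by
    exact congrArg Multiset.prod (Multiset.map_congr rfl fun r _ => by simp)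
  rw [hprodeq]
  have hlt : (Multiset.map (‖·‖) φ.roots).prod < 1 :=
    multiset_prod_abs_lt_one hne fun r hr => hs r (isRoot_of_mem_roots hr)
  have : ‖φ.leadingCoeff‖ * (Multiset.map (‖·‖) φ.roots).prod
      < ‖φ.leadingCoeff‖ * 1 := by
    exact mul_lt_mul_of_pos_left hlt hlc
  rw [mul_one] at this
  calc ‖φ.leadingCoeff‖ * (Multiset.map (‖·‖) φ.roots).prod
      < ‖φ.leadingCoeff‖ := this
    _ = ‖φ.coeff φ.natDegree‖ := rfl

theorem stmt_17 (φ : Polynomial ℂ) (d : ℕ) (hd : 1 ≤ d) :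
    (φ ≠ 0 ∧ φ.natDegree = d ∧ IsSchurPoly φ) ↔
      (schurStep φ ≠ 0 ∧ (schurStep φ).natDegree = d - 1 ∧ IsSchurPoly (schurStep φ) ∧
        ‖φ.coeff 0‖ < ‖(conjReverse φ).coeff 0‖) := by
  constructor
  · rintro ⟨hφ, hdeg, hs⟩
    have hb := coeff_zero_lt φ hφ (by omega) hs
    obtain ⟨hp, hψdeg, hX, hsne, hsdeg⟩ := psi_spec φ hb
    refine ⟨hsne, by omega, ?_, hb⟩
    intro z hz
    by_contra habs
    push_neg at habs
    obtain ⟨hle, hpos⟩ := schur_key hφ hs habs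
    have hψz : (C ((conjReverse φ).coeff 0) * φ - C (φ.coeff 0) * conjReverse φ).eval z = 0 := by
      rw [← hX, eval_mul, eval_X, hz, zero_mul]
    rw [eval_sub, eval_mul, eval_mul, eval_C, eval_C, sub_eq_zero] at hψz
    have habs1 : ‖(conjReverse φ).coeff 0‖ * ‖φ.eval z‖
        = ‖φ.coeff 0‖ * ‖(conjReverse φ).eval z‖ := by
      rw [← norm_mul, ← norm_mul, hψz]
    have h1 : ‖φ.coeff 0‖ * ‖(conjReverse φ).eval z‖
        ≤ ‖φ.coeff 0‖ * ‖φ.eval z‖ :=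
      mul_le_mul_of_nonneg_left hle (norm_nonneg _)
    have h2 : ‖φ.coeff 0‖ * ‖φ.eval z‖
        < ‖(conjReverse φ).coeff 0‖ * ‖φ.eval z‖ :=
      mul_lt_mul_of_pos_right hb hpos
    linarith
  · rintro ⟨hsne', hsdeg', hss, hb⟩
    have hφ : φ ≠ 0 := by
      intro h
      rw [h] at hb
      simp [conjReverse] at hb
    obtain ⟨hp, hψdeg, hX, hsne, hsdeg⟩ := psi_spec φ hb
    have hpd : φ.natDegree = d := by omega
    refine ⟨hφ, hpd, ?_⟩
    set a := (conjReverse φ).coeff 0 with ha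
    set b := φ.coeff 0 with hbdef
    set ψ := C a * φ - C b * conjReverse φ with hψdef
    have hψne : ψ ≠ 0 := by
      intro h
      rw [← hX] at h
      rcases mul_eq_zero.mp h with h' | h'
      · exact hsne' h'
      · exact X_ne_zero h'
    have hψs : IsSchurPoly ψ := by
      intro y hy
      have : (schurStep φ).eval y * y = 0 := by
        rw [show (schurStep φ).eval y * y = ψ.eval y by rw [← hX, eval_mul, eval_X], hy]
      rcases mul_eq_zero.mp this with h' | h'
      · exact hss y h'
      · rw [h']; simp
    intro z hz
    by_contra habs
    push_neg at habs
    obtain ⟨hle, hpos⟩ := schur_key hψne hψs habs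
    have hid : C ((starRingEnd ℂ) a) * ψ + C b * conjReverse ψ
        = C ((starRingEnd ℂ) a * a - b * (starRingEnd ℂ) b) * φ := by
      rw [hψdef, conjReverse_psi φ hb, ← ha, ← hbdef, map_sub, map_mul, map_mul]
      ring
    have hev := congrArg (fun q => Polynomial.eval z q) hid
    simp only [eval_add, eval_mul, eval_C, eval_sub] at hev
    rw [hz, mul_zero] at hev
    have hkey : (starRingEnd ℂ) a * ψ.eval z = -(b * (conjReverse ψ).eval z) := by
      linear_combination hev
    have habs1 : ‖a‖ * ‖ψ.eval z‖
        = ‖b‖ * ‖(conjReverse ψ).eval z‖ := by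
      have := congrArg (‖·‖) hkey
      rwa [norm_mul, norm_neg, norm_mul, Complex.norm_conj] at this
    have h1 : ‖b‖ * ‖(conjReverse ψ).eval z‖
        ≤ ‖b‖ * ‖ψ.eval z‖ :=
      mul_le_mul_of_nonneg_left hle (norm_nonneg _)
    have h2 : ‖b‖ * ‖ψ.eval z‖
        < ‖a‖ * ‖ψ.eval z‖ :=
      mul_lt_mul_of_pos_right hb hpos
    linarith
end
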